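/- (Serfling's Hoeffding inequality for sampling without replacement.) Let x₁, x₂, …, x_n be real numbers with mean μ = (1/n)Σ_{i=1}^n x_i, a = min_i x_i and b = max_i x_i, with a < b. Let X₁, …, X_w be w of these values sampled uniformly at random without replacement (equivalently, let the sample be a uniformly random size-w subset of the multiset {x₁,…,x_n}). Then for every t > 0: P( |(1/w) Σ_{i=1}^w X_i − μ| ≥ t ) ≤ 2 exp( − 2 w t² / ((1 − (w−1)/n)(b−a)²) ). -/

import Mathlib

lemma hoeffding_core {p : ℝ} (hp0 : 0 ≤ p) (hp1 : p ≤ 1) (h : ℝ) :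
    Real.log (1 - p + p * Real.exp h) ≤ p * h + h ^ 2 / 8 := by
  have hD : ∀ y : ℝ, 0 < 1 - p + p * Real.exp y := by
    intro y
    rcases eq_or_lt_of_le hp1 with rfl | hlt
    · simpa using Real.exp_pos y
    · have : 0 ≤ p * Real.exp y := mul_nonneg hp0 (Real.exp_pos y).le
      linarith
  set g : ℝ → ℝ := fun y => p * y + y ^ 2 / 8 - Real.log (1 - p + p * Real.exp y) with hg
  set g' : ℝ → ℝ := fun y => p + y / 4 - p * Real.exp y / (1 - p + p * Real.exp y) with hg'
  have hDd : ∀ y : ℝ, HasDerivAt (fun z => 1 - p + p * Real.exp z) (p * Real.exp y) y := by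
    intro y
    exact ((Real.hasDerivAt_exp y).const_mul p).const_add (1 - p)
  have hgd : ∀ y : ℝ, HasDerivAt g (g' y) y := by
    intro y
    have h1 : HasDerivAt (fun z : ℝ => p * z) p y := by
      simpa using (hasDerivAt_id y).const_mul p
    have h2 : HasDerivAt (fun z : ℝ => z ^ 2 / 8) (y / 4) y := by
      have := (hasDerivAt_pow 2 y).div_const 8
      refine this.congr_deriv ?_
      ring
    have h3 : HasDerivAt (fun z => Real.log (1 - p + p * Real.exp z))
        (p * Real.exp y / (1 - p + p * Real.exp y)) y := (hDd y).log (hD y).ne'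
    exact (h1.add h2).sub h3
  have hg'd : ∀ y : ℝ, HasDerivAt g'
      (1 / 4 - p * Real.exp y * (1 - p) / (1 - p + p * Real.exp y) ^ 2) y := by
    intro y
    have h1 : HasDerivAt (fun z : ℝ => p + z / 4) (1 / 4) y := by
      simpa using ((hasDerivAt_id y).div_const 4).const_add p
    have h2 : HasDerivAt (fun z => p * Real.exp z / (1 - p + p * Real.exp z))
        ((p * Real.exp y * (1 - p + p * Real.exp y) - p * Real.exp y * (p * Real.exp y)) /
          (1 - p + p * Real.exp y) ^ 2) y :=
      ((Real.hasDerivAt_exp y).const_mul p).div (hDd y) (hD y).ne'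
    have := h1.sub h2
    refine this.congr_deriv ?_
    have hne : (1 - p + p * Real.exp y) ^ 2 ≠ 0 := (pow_pos (hD y) 2).ne'
    field_simp
    ring
  have hg''nonneg : ∀ y : ℝ, 0 ≤ 1 / 4 - p * Real.exp y * (1 - p) / (1 - p + p * Real.exp y) ^ 2 := by
    intro y
    have h2 : (0:ℝ) < (1 - p + p * Real.exp y) ^ 2 := pow_pos (hD y) 2
    rw [sub_nonneg, div_le_iff₀ h2]
    nlinarith [sq_nonneg (1 - p - p * Real.exp y)]
  have hg'mono : Monotone g' := monotone_of_hasDerivAt_nonneg hg'd (fun y => hg''nonneg y)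
  have hg'0 : g' 0 = 0 := by simp [hg']
  have hg0 : g 0 = 0 := by simp [hg]
  have key : ∀ y : ℝ, 0 ≤ g y := by
    intro y
    rcases le_total 0 y with hy | hy
    · have hmono : MonotoneOn g (Set.Ici 0) := by
        apply monotoneOn_of_hasDerivWithinAt_nonneg (convex_Ici 0)
          (fun z _ => (hgd z).continuousAt.continuousWithinAt)
          (f' := g') (fun z hz => (hgd z).hasDerivWithinAt)
        intro z hz
        rw [interior_Ici] at hz
        rw [← hg'0]
        exact hg'mono hz.le
      have := hmono Set.self_mem_Ici hy hy
      rwa [hg0] at this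
    · have hanti : AntitoneOn g (Set.Iic 0) := by
        apply antitoneOn_of_hasDerivWithinAt_nonpos (convex_Iic 0)
          (fun z _ => (hgd z).continuousAt.continuousWithinAt)
          (f' := g') (fun z hz => (hgd z).hasDerivWithinAt)
        intro z hz
        rw [interior_Iic] at hz
        rw [← hg'0]
        exact hg'mono hz.le
      have := hanti hy Set.self_mem_Iic hy
      rwa [hg0] at this
  have := key h
  simp only [hg] at this
  linarith

lemma hoeffding_finite {ι : Type*} (A : Finset ι) (hA : A.Nonempty) (y : ι → ℝ)
    (a b : ℝ) (hab : a < b) (hy : ∀ i ∈ A, a ≤ y i ∧ y i ≤ b) (s : ℝ) :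
    ∑ i ∈ A, Real.exp (s * (y i - (∑ j ∈ A, y j) / A.card)) ≤
      A.card * Real.exp (s ^ 2 * (b - a) ^ 2 / 8) := by
  have hN : (0 : ℝ) < A.card := by
    exact_mod_cast Finset.card_pos.mpr hA
  set μ : ℝ := (∑ j ∈ A, y j) / A.card with hμ
  have hba : (0:ℝ) < b - a := by linarith
  have haμ : a ≤ μ := by
    rw [hμ, le_div_iff₀ hN]
    calc (a : ℝ) * A.card = ∑ _j ∈ A, a := by rw [Finset.sum_const, nsmul_eq_mul]; ring
    _ ≤ ∑ j ∈ A, y j := Finset.sum_le_sum fun i hi => (hy i hi).1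
  have hμb : μ ≤ b := by
    rw [hμ, div_le_iff₀ hN]
    calc (∑ j ∈ A, y j) ≤ ∑ _j ∈ A, b := Finset.sum_le_sum fun i hi => (hy i hi).2
    _ = b * A.card := by rw [Finset.sum_const, nsmul_eq_mul]; ring
  set p : ℝ := (μ - a) / (b - a) with hp
  have hp0 : 0 ≤ p := div_nonneg (by linarith) hba.le
  have hp1 : p ≤ 1 := by rw [hp, div_le_one hba]; linarith
  set h : ℝ := s * (b - a) with hh
  -- pointwise convexity bound
  have hpt : ∀ i ∈ A, Real.exp (s * (y i - μ)) ≤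
      ((b - y i) / (b - a)) * Real.exp (s * (a - μ)) +
      ((y i - a) / (b - a)) * Real.exp (s * (b - μ)) := by
    intro i hi
    have hθ0 : (0:ℝ) ≤ (b - y i) / (b - a) := div_nonneg (by linarith [(hy i hi).2]) hba.le
    have hθ0' : (0:ℝ) ≤ (y i - a) / (b - a) := div_nonneg (by linarith [(hy i hi).1]) hba.le
    have hθ1 : (b - y i) / (b - a) + (y i - a) / (b - a) = 1 := by
      field_simp
      ring
    have := convexOn_exp.2 (Set.mem_univ (s * (a - μ))) (Set.mem_univ (s * (b - μ)))
      hθ0 hθ0' hθ1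
    have harg : (b - y i) / (b - a) * (s * (a - μ)) + (y i - a) / (b - a) * (s * (b - μ)) =
        s * (y i - μ) := by
      field_simp
      ring
    simp only [smul_eq_mul] at this
    rw [harg] at this
    exact this
  have hsum : ∑ i ∈ A, Real.exp (s * (y i - μ)) ≤
      (A.card : ℝ) * ((1 - p) * Real.exp (s * (a - μ)) + p * Real.exp (s * (b - μ))) := by
    calc ∑ i ∈ A, Real.exp (s * (y i - μ))
        ≤ ∑ i ∈ A, (((b - y i) / (b - a)) * Real.exp (s * (a - μ)) +
            ((y i - a) / (b - a)) * Real.exp (s * (b - μ))) := Finset.sum_le_sum hpt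
      _ = (A.card : ℝ) * ((1 - p) * Real.exp (s * (a - μ)) + p * Real.exp (s * (b - μ))) := by
          rw [Finset.sum_add_distrib, ← Finset.sum_mul, ← Finset.sum_mul]
          have e1 : ∑ i ∈ A, (b - y i) / (b - a) = (A.card : ℝ) * (1 - p) := by
            rw [← Finset.sum_div, Finset.sum_sub_distrib, Finset.sum_const, nsmul_eq_mul, hp, hμ]
            field_simp
            ring
          have e2 : ∑ i ∈ A, (y i - a) / (b - a) = (A.card : ℝ) * p := by
            rw [← Finset.sum_div, Finset.sum_sub_distrib, Finset.sum_const, nsmul_eq_mul, hp, hμ]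
            field_simp
          rw [e1, e2]; ring
  have hkey : (1 - p) * Real.exp (s * (a - μ)) + p * Real.exp (s * (b - μ)) ≤
      Real.exp (s ^ 2 * (b - a) ^ 2 / 8) := by
    have e1 : s * (a - μ) = -(p * h) := by rw [hh, hp]; field_simp; ring
    have e2 : s * (b - μ) = -(p * h) + h := by rw [hh, hp]; field_simp; ring
    rw [e1, e2, Real.exp_add]
    have hDpos : 0 < 1 - p + p * Real.exp h := by
      rcases eq_or_lt_of_le hp1 with heq | hlt
      · rw [heq]; simpa using Real.exp_pos h
      · have : 0 ≤ p * Real.exp h := mul_nonneg hp0 (Real.exp_pos h).le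
        linarith
    have hlog := hoeffding_core hp0 hp1 h
    have : 1 - p + p * Real.exp h ≤ Real.exp (p * h + h ^ 2 / 8) := by
      rw [← Real.exp_log hDpos]
      exact Real.exp_le_exp.mpr hlog
    calc (1 - p) * Real.exp (-(p * h)) + p * (Real.exp (-(p * h)) * Real.exp h)
        = Real.exp (-(p * h)) * (1 - p + p * Real.exp h) := by ring
      _ ≤ Real.exp (-(p * h)) * Real.exp (p * h + h ^ 2 / 8) := by
          exact mul_le_mul_of_nonneg_left this (Real.exp_pos _).le
      _ = Real.exp (h ^ 2 / 8) := by rw [← Real.exp_add]; ring_nf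
      _ = Real.exp (s ^ 2 * (b - a) ^ 2 / 8) := by rw [hh]; ring_nf
  calc ∑ i ∈ A, Real.exp (s * (y i - μ)) ≤
      (A.card : ℝ) * ((1 - p) * Real.exp (s * (a - μ)) + p * Real.exp (s * (b - μ))) := hsum
    _ ≤ (A.card : ℝ) * Real.exp (s ^ 2 * (b - a) ^ 2 / 8) :=
        mul_le_mul_of_nonneg_left hkey hN.le

lemma sum_powersetCard_succ {ι : Type*} [DecidableEq ι] (A : Finset ι) (w : ℕ)
    (g : Finset ι → ℝ) :
    ((w : ℝ) + 1) * ∑ T ∈ A.powersetCard (w + 1), g T =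
      ∑ i ∈ A, ∑ T ∈ (A.erase i).powersetCard w, g (insert i T) := by
  have lhs_eq : ((w : ℝ) + 1) * ∑ T ∈ A.powersetCard (w + 1), g T =
      ∑ T ∈ A.powersetCard (w + 1), ∑ _i ∈ T, g T := by
    rw [Finset.mul_sum]
    refine Finset.sum_congr rfl fun T hT => ?_
    have hcard : T.card = w + 1 := (Finset.mem_powersetCard.mp hT).2
    rw [Finset.sum_const, hcard, nsmul_eq_mul]
    push_cast
    ring
  rw [lhs_eq, Finset.sum_sigma', Finset.sum_sigma']
  refine Finset.sum_nbij' (fun p => ⟨p.2, p.1.erase p.2⟩) (fun p => ⟨insert p.1 p.2, p.1⟩)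
    ?_ ?_ ?_ ?_ ?_
  · rintro ⟨T, i⟩ hp
    simp only [Finset.mem_sigma] at hp ⊢
    obtain ⟨hT, hi⟩ := hp
    obtain ⟨hTA, hTcard⟩ := Finset.mem_powersetCard.mp hT
    refine ⟨hTA hi, Finset.mem_powersetCard.mpr ⟨?_, ?_⟩⟩
    · exact fun j hj => Finset.mem_erase.mpr
        ⟨(Finset.mem_erase.mp hj).1, hTA (Finset.mem_of_mem_erase hj)⟩
    · rw [Finset.card_erase_of_mem hi, hTcard]; omega
  · rintro ⟨i, T⟩ hp
    simp only [Finset.mem_sigma] at hp ⊢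
    obtain ⟨hi, hT⟩ := hp
    obtain ⟨hTA, hTcard⟩ := Finset.mem_powersetCard.mp hT
    have hiT : i ∉ T := fun hc => (Finset.mem_erase.mp (hTA hc)).1 rfl
    refine ⟨Finset.mem_powersetCard.mpr ⟨?_, ?_⟩, Finset.mem_insert_self i T⟩
    · intro j hj
      rcases Finset.mem_insert.mp hj with rfl | hj'
      · exact hi
      · exact Finset.mem_of_mem_erase (hTA hj')
    · rw [Finset.card_insert_of_notMem hiT, hTcard]
  · rintro ⟨T, i⟩ hp
    simp only [Finset.mem_sigma] at hp
    simp [Finset.insert_erase hp.2]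
  · rintro ⟨i, T⟩ hp
    simp only [Finset.mem_sigma] at hp
    obtain ⟨hi, hT⟩ := hp
    have hTA := (Finset.mem_powersetCard.mp hT).1
    have hiT : i ∉ T := fun hc => (Finset.mem_erase.mp (hTA hc)).1 rfl
    simp [Finset.erase_insert hiT]
  · rintro ⟨T, i⟩ hp
    simp only [Finset.mem_sigma] at hp
    simp [Finset.insert_erase hp.2]

lemma sum_sq_telescope (m : ℕ) (hm : 1 ≤ m) (w : ℕ) :
    ∑ k ∈ Finset.range w, ((m : ℝ) / ((m : ℝ) + w - 1 - k)) ^ 2 ≤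
      (w : ℝ) * ((m : ℝ) + 1) / ((m : ℝ) + w) := by
  induction w with
  | zero => simp
  | succ w ih =>
    have hm' : (1 : ℝ) ≤ (m : ℝ) := by exact_mod_cast hm
    have hw' : (0 : ℝ) ≤ (w : ℝ) := Nat.cast_nonneg w
    have hsplit : ∑ k ∈ Finset.range (w + 1), ((m : ℝ) / ((m : ℝ) + (w + 1 : ℕ) - 1 - k)) ^ 2 =
        (∑ k ∈ Finset.range w, ((m : ℝ) / ((m : ℝ) + w - 1 - k)) ^ 2) +
          ((m : ℝ) / ((m : ℝ) + w)) ^ 2 := by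
      rw [Finset.sum_range_succ']
      congr 1
      · refine Finset.sum_congr rfl fun k hk => ?_
        push_cast
        ring_nf
      · push_cast
        ring_nf
    rw [hsplit]
    have hfin : (w : ℝ) * ((m : ℝ) + 1) / ((m : ℝ) + w) + ((m : ℝ) / ((m : ℝ) + w)) ^ 2 ≤
        ((w : ℝ) + 1) * ((m : ℝ) + 1) / ((m : ℝ) + w + 1) := by
      have h1 : (0 : ℝ) < (m : ℝ) + w := by linarith
      have h2 : (0 : ℝ) < (m : ℝ) + w + 1 := by linarith
      rw [div_pow, div_add_div _ _ h1.ne' (by positivity), div_le_div_iff₀ (by positivity) h2]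
      nlinarith [mul_nonneg (by linarith : (0:ℝ) ≤ (m:ℝ)) hw', sq_nonneg ((m:ℝ) + w), h1, h2]
    calc (∑ k ∈ Finset.range w, ((m : ℝ) / ((m : ℝ) + w - 1 - k)) ^ 2) +
          ((m : ℝ) / ((m : ℝ) + w)) ^ 2
        ≤ (w : ℝ) * ((m : ℝ) + 1) / ((m : ℝ) + w) + ((m : ℝ) / ((m : ℝ) + w)) ^ 2 := by
          linarith [ih]
      _ ≤ ((w : ℝ) + 1) * ((m : ℝ) + 1) / ((m : ℝ) + w + 1) := hfin
      _ = ((w + 1 : ℕ) : ℝ) * ((m : ℝ) + 1) / ((m : ℝ) + (w + 1 : ℕ)) := by push_cast; ring_nf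

lemma chernoff_count {α : Type*} [DecidableEq α] (S : Finset α) (f : α → ℝ) (u lam : ℝ)
    (hlam : 0 ≤ lam) :
    ((S.filter (fun s => u ≤ f s)).card : ℝ) * Real.exp (lam * u) ≤
      ∑ s ∈ S, Real.exp (lam * f s) := by
  calc ((S.filter (fun s => u ≤ f s)).card : ℝ) * Real.exp (lam * u)
      = ∑ _s ∈ S.filter (fun s => u ≤ f s), Real.exp (lam * u) := by
        rw [Finset.sum_const, nsmul_eq_mul]
    _ ≤ ∑ s ∈ S.filter (fun s => u ≤ f s), Real.exp (lam * f s) := by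
        refine Finset.sum_le_sum fun s hs => ?_
        have := (Finset.mem_filter.mp hs).2
        exact Real.exp_le_exp.mpr (mul_le_mul_of_nonneg_left this hlam)
    _ ≤ ∑ s ∈ S, Real.exp (lam * f s) :=
        Finset.sum_le_sum_of_subset_of_nonneg (Finset.filter_subset _ _)
          (fun s _ _ => (Real.exp_pos _).le)

lemma mgf_subsets {ι : Type*} [DecidableEq ι] (a b : ℝ) (hab : a < b) (lam : ℝ)
    (m : ℕ) (hm : 1 ≤ m) :
    ∀ w : ℕ, ∀ A : Finset ι, ∀ x : ι → ℝ, (∀ i ∈ A, a ≤ x i ∧ x i ≤ b) →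
    A.card = m + w →
    ∑ T ∈ A.powersetCard w,
        Real.exp (lam * (∑ i ∈ T, x i - (w : ℝ) * ((∑ i ∈ A, x i) / A.card))) ≤
      (A.card.choose w : ℝ) *
        Real.exp (lam ^ 2 * (b - a) ^ 2 / 8 *
          ∑ k ∈ Finset.range w, ((m : ℝ) / ((m : ℝ) + w - 1 - k)) ^ 2) := by
  intro w
  induction w with
  | zero =>
    intro A x hx hcard
    simp
  | succ w ih =>
    intro A x hx hcard
    have hmw : (0 : ℝ) < (m : ℝ) + w := by
      have : (1:ℝ) ≤ (m:ℝ) := by exact_mod_cast hm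
      have := Nat.cast_nonneg (α := ℝ) w
      linarith
    have hNcard : (A.card : ℝ) = (m : ℝ) + w + 1 := by rw [hcard]; push_cast; ring
    have hNpos : (0 : ℝ) < (A.card : ℝ) := by rw [hNcard]; linarith
    set μ : ℝ := (∑ i ∈ A, x i) / A.card with hμdef
    set s : ℝ := lam * ((m : ℝ) / ((m : ℝ) + w)) with hsdef
    -- step 1 : double counting
    have step1 := sum_powersetCard_succ A w
      (fun T => Real.exp (lam * (∑ i ∈ T, x i - ((w : ℕ) + 1 : ℝ) * μ)))
    -- step 2 : per-i inner bound
    have inner : ∀ i ∈ A,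
        ∑ T ∈ (A.erase i).powersetCard w,
          Real.exp (lam * (∑ j ∈ insert i T, x j - ((w : ℕ) + 1 : ℝ) * μ)) ≤
        Real.exp (s * (x i - μ)) * (((m + w).choose w : ℝ) *
          Real.exp (lam ^ 2 * (b - a) ^ 2 / 8 *
            ∑ k ∈ Finset.range w, ((m : ℝ) / ((m : ℝ) + w - 1 - k)) ^ 2)) := by
      intro i hi
      have hcard' : (A.erase i).card = m + w := by
        rw [Finset.card_erase_of_mem hi, hcard]; omega
      have hsum' : ∑ j ∈ A.erase i, x j = (∑ j ∈ A, x j) - x i := by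
        have := Finset.sum_erase_add A x hi
        linarith
      have hrw : ∀ T ∈ (A.erase i).powersetCard w,
          Real.exp (lam * (∑ j ∈ insert i T, x j - ((w : ℕ) + 1 : ℝ) * μ)) =
          Real.exp (s * (x i - μ)) *
            Real.exp (lam * (∑ j ∈ T, x j -
              (w : ℝ) * ((∑ j ∈ A.erase i, x j) / (A.erase i).card))) := by
        intro T hT
        have hTsub := (Finset.mem_powersetCard.mp hT).1
        have hiT : i ∉ T := fun hc => (Finset.mem_erase.mp (hTsub hc)).1 rfl
        rw [Finset.sum_insert hiT, ← Real.exp_add]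
        congr 1
        rw [hsdef, hμdef, hsum', hcard', hNcard]
        have h1 : ((m + w : ℕ) : ℝ) = (m : ℝ) + w := by push_cast; ring
        rw [h1]
        field_simp
        ring
      rw [Finset.sum_congr rfl hrw, ← Finset.mul_sum]
      refine mul_le_mul_of_nonneg_left ?_ (Real.exp_pos _).le
      have h := ih (A.erase i) x (fun j hj => hx j (Finset.mem_of_mem_erase hj)) hcard'
      rw [hcard'] at h
      rw [hcard']
      exact h
    -- step 3 : sum over i with Hoeffding
    have hA : A.Nonempty := by
      rw [← Finset.card_pos, hcard]; omega
    have houter : ∑ i ∈ A, Real.exp (s * (x i - μ)) ≤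
        (A.card : ℝ) * Real.exp (s ^ 2 * (b - a) ^ 2 / 8) :=
      hoeffding_finite A hA x a b hab hx s
    -- combine
    have hcomb : ((w : ℝ) + 1) *
        ∑ T ∈ A.powersetCard (w + 1),
          Real.exp (lam * (∑ i ∈ T, x i - ((w : ℕ) + 1 : ℝ) * μ)) ≤
        (A.card : ℝ) * Real.exp (s ^ 2 * (b - a) ^ 2 / 8) * (((m + w).choose w : ℝ) *
          Real.exp (lam ^ 2 * (b - a) ^ 2 / 8 *
            ∑ k ∈ Finset.range w, ((m : ℝ) / ((m : ℝ) + w - 1 - k)) ^ 2)) := by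
      rw [step1]
      calc ∑ i ∈ A, ∑ T ∈ (A.erase i).powersetCard w,
            Real.exp (lam * (∑ j ∈ insert i T, x j - ((w : ℕ) + 1 : ℝ) * μ))
          ≤ ∑ i ∈ A, Real.exp (s * (x i - μ)) * (((m + w).choose w : ℝ) *
              Real.exp (lam ^ 2 * (b - a) ^ 2 / 8 *
                ∑ k ∈ Finset.range w, ((m : ℝ) / ((m : ℝ) + w - 1 - k)) ^ 2)) :=
            Finset.sum_le_sum inner
        _ = (∑ i ∈ A, Real.exp (s * (x i - μ))) * (((m + w).choose w : ℝ) *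
              Real.exp (lam ^ 2 * (b - a) ^ 2 / 8 *
                ∑ k ∈ Finset.range w, ((m : ℝ) / ((m : ℝ) + w - 1 - k)) ^ 2)) := by
            rw [Finset.sum_mul]
        _ ≤ (A.card : ℝ) * Real.exp (s ^ 2 * (b - a) ^ 2 / 8) * (((m + w).choose w : ℝ) *
              Real.exp (lam ^ 2 * (b - a) ^ 2 / 8 *
                ∑ k ∈ Finset.range w, ((m : ℝ) / ((m : ℝ) + w - 1 - k)) ^ 2)) := by
            refine mul_le_mul_of_nonneg_right houter (by positivity)
    -- choose/exponent bookkeeping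
    have hchoose : (A.card : ℝ) * ((m + w).choose w : ℝ) =
        ((w : ℝ) + 1) * (A.card.choose (w + 1) : ℝ) := by
      rw [hcard]
      have hadd : m + (w + 1) = m + w + 1 := by omega
      rw [hadd]
      have := Nat.add_one_mul_choose_eq (m + w) w
      have hcast : ((m + w + 1) * ((m + w).choose w) : ℕ) =
          ((m + w + 1).choose (w + 1) * (w + 1) : ℕ) := by
        simpa [Nat.succ_eq_add_one] using this
      have : (((m + w + 1) : ℕ) : ℝ) * (((m + w).choose w : ℕ) : ℝ) =
          (((m + w + 1).choose (w + 1) : ℕ) : ℝ) * (((w + 1) : ℕ) : ℝ) := by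
        exact_mod_cast congrArg (Nat.cast : ℕ → ℝ) hcast
      push_cast at this ⊢
      linarith
    have hexp : Real.exp (s ^ 2 * (b - a) ^ 2 / 8) *
        Real.exp (lam ^ 2 * (b - a) ^ 2 / 8 *
          ∑ k ∈ Finset.range w, ((m : ℝ) / ((m : ℝ) + w - 1 - k)) ^ 2) =
        Real.exp (lam ^ 2 * (b - a) ^ 2 / 8 *
          ∑ k ∈ Finset.range (w + 1), ((m : ℝ) / ((m : ℝ) + (w + 1 : ℕ) - 1 - k)) ^ 2) := by
      rw [← Real.exp_add]
      congr 1
      rw [Finset.sum_range_succ']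
      have e1 : ∀ k ∈ Finset.range w,
          ((m : ℝ) / ((m : ℝ) + (w + 1 : ℕ) - 1 - ((k + 1 : ℕ) : ℝ))) ^ 2 =
          ((m : ℝ) / ((m : ℝ) + w - 1 - k)) ^ 2 := by
        intro k hk
        push_cast
        ring_nf
      rw [Finset.sum_congr rfl e1]
      have e0 : ((m : ℝ) / ((m : ℝ) + (w + 1 : ℕ) - 1 - ((0 : ℕ) : ℝ))) ^ 2 =
          ((m : ℝ) / ((m : ℝ) + w)) ^ 2 := by push_cast; ring_nf
      rw [e0, hsdef]
      field_simp
      ring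
    -- finish
    have hfinal : ((w : ℝ) + 1) *
        ∑ T ∈ A.powersetCard (w + 1),
          Real.exp (lam * (∑ i ∈ T, x i - ((w : ℕ) + 1 : ℝ) * μ)) ≤
        ((w : ℝ) + 1) * ((A.card.choose (w + 1) : ℝ) *
          Real.exp (lam ^ 2 * (b - a) ^ 2 / 8 *
            ∑ k ∈ Finset.range (w + 1), ((m : ℝ) / ((m : ℝ) + (w + 1 : ℕ) - 1 - k)) ^ 2)) := by
      calc ((w : ℝ) + 1) * ∑ T ∈ A.powersetCard (w + 1),
            Real.exp (lam * (∑ i ∈ T, x i - ((w : ℕ) + 1 : ℝ) * μ))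
          ≤ (A.card : ℝ) * Real.exp (s ^ 2 * (b - a) ^ 2 / 8) * (((m + w).choose w : ℝ) *
              Real.exp (lam ^ 2 * (b - a) ^ 2 / 8 *
                ∑ k ∈ Finset.range w, ((m : ℝ) / ((m : ℝ) + w - 1 - k)) ^ 2)) := hcomb
        _ = ((A.card : ℝ) * ((m + w).choose w : ℝ)) *
              (Real.exp (s ^ 2 * (b - a) ^ 2 / 8) *
               Real.exp (lam ^ 2 * (b - a) ^ 2 / 8 *
                ∑ k ∈ Finset.range w, ((m : ℝ) / ((m : ℝ) + w - 1 - k)) ^ 2)) := by ring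
        _ = ((w : ℝ) + 1) * ((A.card.choose (w + 1) : ℝ) *
              Real.exp (lam ^ 2 * (b - a) ^ 2 / 8 *
                ∑ k ∈ Finset.range (w + 1),
                  ((m : ℝ) / ((m : ℝ) + (w + 1 : ℕ) - 1 - k)) ^ 2)) := by
            rw [hchoose, hexp]; ring
    have hwpos : (0 : ℝ) < (w : ℝ) + 1 := by positivity
    have := le_of_mul_le_mul_left (by
      calc ((w : ℝ) + 1) * ∑ T ∈ A.powersetCard (w + 1),
            Real.exp (lam * (∑ i ∈ T, x i - ((w : ℕ) + 1 : ℝ) * μ)) ≤ _ := hfinal) hwpos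
    have hcast2 : ((w + 1 : ℕ) : ℝ) = (w : ℝ) + 1 := by push_cast; ring
    rw [hcast2] at this ⊢
    exact this

open Classical in
/-- Serfling's Hoeffding inequality for sampling without replacement: the probability (over a
uniformly random size-`w` subset of `{x₁,…,x_n}`) that the sample mean deviates from the
population mean `μ` by at least `t` is at most
`2 exp(−2wt²/((1−(w−1)/n)(b−a)²))`, where `a = min_i x_i` and `b = max_i x_i`. -/
theorem serfling_hoeffding (n w : ℕ) (hw : 1 ≤ w) (hwn : w ≤ n)
    (x : Fin n → ℝ) (a b : ℝ)
    (ha : (∃ i, x i = a) ∧ ∀ i, a ≤ x i)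
    (hb : (∃ i, x i = b) ∧ ∀ i, x i ≤ b)
    (hab : a < b) (t : ℝ) (ht : 0 < t) :
    ((((Finset.univ : Finset (Fin n)).powersetCard w).filter
        (fun s => t ≤ |(∑ i ∈ s, x i) / (w : ℝ) - (∑ i, x i) / (n : ℝ)|)).card : ℝ) /
      ((((Finset.univ : Finset (Fin n)).powersetCard w).card : ℝ)) ≤
      2 * Real.exp (-(2 * (w : ℝ) * t ^ 2) /
        ((1 - ((w : ℝ) - 1) / (n : ℝ)) * (b - a) ^ 2)) := by
  classical
  set P : Finset (Finset (Fin n)) := (Finset.univ : Finset (Fin n)).powersetCard w with hP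
  have hu : (Finset.univ : Finset (Fin n)).card = n := by simp
  have hPcard : P.card = n.choose w := by rw [hP, Finset.card_powersetCard, hu]
  rcases eq_or_lt_of_le hwn with rfl | hlt
  · -- w = n : sample is everything, deviation is 0
    have hfe : (P.filter
        (fun s => t ≤ |(∑ i ∈ s, x i) / (w : ℝ) - (∑ i, x i) / (w : ℝ)|)) = ∅ := by
      refine Finset.filter_false_of_mem fun T hT => ?_
      have hTm := Finset.mem_powersetCard.mp hT
      have hTuniv : T = Finset.univ := Finset.eq_univ_of_card T (by rw [hTm.2, Fintype.card_fin])
      rw [hTuniv]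
      simp only [sub_self, abs_zero]
      push_neg
      exact ht
    rw [hfe]
    simp only [Finset.card_empty, Nat.cast_zero, zero_div]
    positivity
  · -- w < n
    set m : ℕ := n - w with hm
    have hm1 : 1 ≤ m := by omega
    have hmw : m + w = n := by omega
    have hnpos : (0 : ℝ) < (n : ℝ) := by
      have : 0 < n := by omega
      exact_mod_cast this
    have hwpos : (0 : ℝ) < (w : ℝ) := by exact_mod_cast hw
    have hmr : (m : ℝ) = (n : ℝ) - (w : ℝ) := by
      have : ((m + w : ℕ) : ℝ) = (n : ℝ) := by exact_mod_cast congrArg (Nat.cast (R := ℝ)) hmw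
      push_cast at this
      linarith
    have hba : (0 : ℝ) < b - a := by linarith
    have hnw1 : (0 : ℝ) < (n : ℝ) - (w : ℝ) + 1 := by
      have : (w : ℝ) ≤ (n : ℝ) := by exact_mod_cast hwn
      linarith
    set lam : ℝ := 4 * t * (n : ℝ) / (((n : ℝ) - (w : ℝ) + 1) * (b - a) ^ 2) with hlam
    have hlampos : 0 < lam := by rw [hlam]; positivity
    set D : Finset (Fin n) → ℝ := fun T => ∑ i ∈ T, x i - (w : ℝ) * ((∑ i, x i) / (n : ℝ))
      with hD
    set E : ℝ := lam ^ 2 * (b - a) ^ 2 / 8 * ((w : ℝ) * ((m : ℝ) + 1) / ((m : ℝ) + (w : ℝ)))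
      with hE
    -- MGF bound for ±lam
    have hmgf : ∀ l : ℝ, ∑ T ∈ P, Real.exp (l * D T) ≤
        (n.choose w : ℝ) * Real.exp (l ^ 2 * (b - a) ^ 2 / 8 *
          ((w : ℝ) * ((m : ℝ) + 1) / ((m : ℝ) + (w : ℝ)))) := by
      intro l
      have hmgf0 := mgf_subsets a b hab l m hm1 w (Finset.univ : Finset (Fin n)) x
        (fun i _ => ⟨ha.2 i, hb.2 i⟩) (by rw [hu]; omega)
      rw [hu] at hmgf0
      refine hmgf0.trans ?_
      refine mul_le_mul_of_nonneg_left ?_ (Nat.cast_nonneg _)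
      refine Real.exp_le_exp.mpr ?_
      refine mul_le_mul_of_nonneg_left (sum_sq_telescope m hm1 w) (by positivity)
    -- filter rewriting
    have hfeq : (P.filter
        (fun s => t ≤ |(∑ i ∈ s, x i) / (w : ℝ) - (∑ i, x i) / (n : ℝ)|)) =
        P.filter (fun T => (w : ℝ) * t ≤ |D T|) := by
      refine Finset.filter_congr fun T hT => ?_
      have harg : (∑ i ∈ T, x i) / (w : ℝ) - (∑ i, x i) / (n : ℝ) = D T / (w : ℝ) := by
        rw [hD]
        field_simp
      rw [harg, abs_div, abs_of_pos hwpos, le_div_iff₀ hwpos]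
      constructor
      · intro h; linarith [mul_comm t (w : ℝ)]
      · intro h; nlinarith
    -- union bound + Chernoff
    have hsub : P.filter (fun T => (w : ℝ) * t ≤ |D T|) ⊆
        P.filter (fun T => (w : ℝ) * t ≤ D T) ∪
        P.filter (fun T => (w : ℝ) * t ≤ -D T) := by
      intro T hT
      rw [Finset.mem_filter] at hT
      rcases le_abs.mp hT.2 with h | h
      · exact Finset.mem_union_left _ (Finset.mem_filter.mpr ⟨hT.1, h⟩)
      · exact Finset.mem_union_right _ (Finset.mem_filter.mpr ⟨hT.1, by linarith [abs_nonneg (D T)]⟩)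
    have hcard_split : ((P.filter (fun T => (w : ℝ) * t ≤ |D T|)).card : ℝ) ≤
        ((P.filter (fun T => (w : ℝ) * t ≤ D T)).card : ℝ) +
        ((P.filter (fun T => (w : ℝ) * t ≤ -D T)).card : ℝ) := by
      have h1 := Finset.card_le_card hsub
      have h2 := Finset.card_union_le (P.filter (fun T => (w : ℝ) * t ≤ D T))
        (P.filter (fun T => (w : ℝ) * t ≤ -D T))
      exact_mod_cast h1.trans h2
    have hch1 := chernoff_count P D ((w : ℝ) * t) lam hlampos.le
    have hch2 := chernoff_count P (fun T => -D T) ((w : ℝ) * t) lam hlampos.le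
    have hneg : ∑ T ∈ P, Real.exp (lam * -D T) = ∑ T ∈ P, Real.exp ((-lam) * D T) := by
      refine Finset.sum_congr rfl fun T _ => ?_
      congr 1
      ring
    have hbound1 : ((P.filter (fun T => (w : ℝ) * t ≤ D T)).card : ℝ) *
        Real.exp (lam * ((w : ℝ) * t)) ≤ (n.choose w : ℝ) * Real.exp E := by
      refine hch1.trans ?_
      have := hmgf lam
      rw [hE]
      exact this
    have hbound2 : ((P.filter (fun T => (w : ℝ) * t ≤ -D T)).card : ℝ) *
        Real.exp (lam * ((w : ℝ) * t)) ≤ (n.choose w : ℝ) * Real.exp E := by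
      refine hch2.trans ?_
      rw [hneg]
      have := hmgf (-lam)
      rw [hE]
      simpa using this
    have hCpos : (0 : ℝ) < (n.choose w : ℝ) := by
      exact_mod_cast Nat.choose_pos hwn
    have hmain : ((P.filter (fun T => (w : ℝ) * t ≤ |D T|)).card : ℝ) ≤
        2 * (n.choose w : ℝ) * Real.exp (E - lam * ((w : ℝ) * t)) := by
      have hexp_pos := Real.exp_pos (lam * ((w : ℝ) * t))
      rw [Real.exp_sub, div_eq_mul_inv]
      rw [← le_div_iff₀ hexp_pos] at hbound1 hbound2
      refine hcard_split.trans ((add_le_add hbound1 hbound2).trans_eq ?_)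
      field_simp
      ring
    -- exponent equality
    have hexp_eq : E - lam * ((w : ℝ) * t) =
        -(2 * (w : ℝ) * t ^ 2) / ((1 - ((w : ℝ) - 1) / (n : ℝ)) * (b - a) ^ 2) := by
      have hden : 1 - ((w : ℝ) - 1) / (n : ℝ) = ((n : ℝ) - (w : ℝ) + 1) / (n : ℝ) := by
        field_simp
        ring
      rw [hden, hE, hlam, hmr]
      have h1 : ((n : ℝ) - (w : ℝ) + 1) ≠ 0 := hnw1.ne'
      have h2 : (b - a) ≠ 0 := hba.ne'
      have h3 : ((n : ℝ) - (w : ℝ) + (w : ℝ)) = (n : ℝ) := by ring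
      rw [h3]
      field_simp
      ring
    rw [hfeq]
    rw [div_le_iff₀ (by rw [hPcard]; exact hCpos)]
    rw [hPcard]
    calc ((P.filter (fun T => (w : ℝ) * t ≤ |D T|)).card : ℝ)
        ≤ 2 * (n.choose w : ℝ) * Real.exp (E - lam * ((w : ℝ) * t)) := hmain
      _ = 2 * Real.exp (-(2 * (w : ℝ) * t ^ 2) /
            ((1 - ((w : ℝ) - 1) / (n : ℝ)) * (b - a) ^ 2)) * (n.choose w : ℝ) := by
          rw [hexp_eq]; ring
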